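/- Let q : ℕ → ℝ be a non-increasing sequence of non-negative numbers with q 0 > 0, and Q n = ∑_{k=0}^{n-1} q k. If Q(2^k)/Q(2^{k-1}) → 1 as k → ∞, then 2^k · q(2^k) / Q(2^k) → 0 as k → ∞. -/

import Mathlib

open Filter

theorem stmt_2 (q : ℕ → ℝ) (hq : Antitone q) (hq0 : ∀ k, 0 ≤ q k) (hq0' : 0 < q 0)
    (Q : ℕ → ℝ) (hQ : ∀ n, Q n = ∑ k ∈ Finset.range n, q k)
    (h1 : Tendsto (fun k => Q (2 ^ k) / Q (2 ^ (k - 1))) atTop (nhds 1)) :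
    Tendsto (fun k => 2 ^ k * q (2 ^ k) / Q (2 ^ k)) atTop (nhds 0) := by
  have hQpos : ∀ n : ℕ, 0 < n → 0 < Q n := by
    intro n hn
    rw [hQ]
    have h := Finset.single_le_sum (f := q) (fun i _ => hq0 i) (Finset.mem_range.mpr hn)
    linarith
  have key : ∀ k : ℕ, 1 ≤ k →
      (2 : ℝ) ^ k * q (2 ^ k) ≤ 2 * (Q (2 ^ k) - Q (2 ^ (k - 1))) := by
    intro k hk
    obtain ⟨m, rfl⟩ := Nat.exists_eq_succ_of_ne_zero (by omega : k ≠ 0)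
    simp only [Nat.succ_sub_one]
    have h2 : (2 : ℕ) ^ m ≤ 2 ^ (m + 1) := Nat.pow_le_pow_right (by norm_num) (by omega)
    have hsplit : Q (2 ^ (m + 1)) = Q (2 ^ m) + ∑ j ∈ Finset.Ico (2 ^ m) (2 ^ (m + 1)), q j := by
      rw [hQ, hQ, Finset.range_eq_Ico, Finset.range_eq_Ico]
      exact (Finset.sum_Ico_consecutive q (Nat.zero_le _) h2).symm
    have hsum : ((2 ^ (m + 1) - 2 ^ m : ℕ) : ℝ) * q (2 ^ (m + 1)) ≤
        ∑ j ∈ Finset.Ico (2 ^ m) (2 ^ (m + 1)), q j := by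
      have := Finset.card_nsmul_le_sum (Finset.Ico (2 ^ m) (2 ^ (m + 1))) q (q (2 ^ (m + 1)))
        (fun j hj => hq (le_of_lt (Finset.mem_Ico.mp hj).2))
      rwa [Nat.card_Ico, nsmul_eq_mul] at this
    have hcast : ((2 ^ (m + 1) - 2 ^ m : ℕ) : ℝ) = 2 ^ m := by
      have : (2 : ℕ) ^ (m + 1) - 2 ^ m = 2 ^ m := by
        rw [pow_succ]; omega
      rw [this]; push_cast; ring
    rw [hcast] at hsum
    have : (2 : ℝ) ^ (m + 1) * q (2 ^ (m + 1)) = 2 * ((2 : ℝ) ^ m * q (2 ^ (m + 1))) := by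
      ring
    rw [this]
    nlinarith [hsum, hsplit]
  have hinv : Tendsto (fun k => Q (2 ^ (k - 1)) / Q (2 ^ k)) atTop (nhds 1) := by
    have := h1.inv₀ one_ne_zero
    simp only [inv_div, inv_one] at this
    exact this
  have hg : Tendsto (fun k => 2 * (1 - Q (2 ^ (k - 1)) / Q (2 ^ k))) atTop (nhds 0) := by
    have : Tendsto (fun k => (2:ℝ) * (1 - Q (2 ^ (k - 1)) / Q (2 ^ k))) atTop (nhds (2 * (1 - 1))) :=
      (((tendsto_const_nhds : Tendsto (fun _ : ℕ => (1:ℝ)) atTop (nhds 1)).sub hinv).const_mul 2)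
    simpa using this
  apply tendsto_of_tendsto_of_tendsto_of_le_of_le' tendsto_const_nhds hg
  · filter_upwards with k
    exact div_nonneg (mul_nonneg (by positivity) (hq0 _)) (le_of_lt (hQpos _ (by positivity)))
  · filter_upwards [eventually_ge_atTop 1] with k hk
    have hQk : 0 < Q (2 ^ k) := hQpos _ (by positivity)
    rw [div_le_iff₀ hQk]
    have heq : 2 * (1 - Q (2 ^ (k - 1)) / Q (2 ^ k)) * Q (2 ^ k)
        = 2 * (Q (2 ^ k) - Q (2 ^ (k - 1))) := by
      field_simp
    rw [heq]
    exact key k hk
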